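/- If F ⊆ 2^[n] has VC-dimension less than d, then ℓ(F) < 2d, where ℓ(F) = Σ_{A∈F} 1/C(n,|A|). -/

import Mathlib

open Finset

private lemma choose_mono_half {n r s : ℕ} (hrs : r ≤ s) (hs : 2 * s ≤ n) :
    n.choose r ≤ n.choose s := by
  induction s with
  | zero => simp [Nat.le_zero.mp hrs]
  | succ m ih =>
    rcases Nat.lt_or_ge r (m + 1) with h | h
    · exact (ih (by omega) (by omega)).trans
        (Nat.choose_le_succ_of_lt_half_left (by omega))
    · have hr : r = m + 1 := by omega
      subst hr; exact le_rfl

private lemma choose_mid_le {n e j : ℕ} (h1 : e ≤ j) (h2 : j ≤ n - e) :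
    n.choose e ≤ n.choose j := by
  rcases le_or_gt (2 * j) n with h | h
  · exact choose_mono_half h1 h
  · have hjn : j ≤ n := by omega
    rw [← Nat.choose_symm hjn]
    exact choose_mono_half (by omega) (by omega)

private lemma sum_card_grouped (n : ℕ) (g : ℕ → ℝ) :
    ∑ A : Finset (Fin n), g A.card = ∑ j ∈ Finset.range (n + 1), (n.choose j : ℝ) * g j := by
  rw [← Finset.powerset_univ, Finset.sum_powerset_apply_card, Finset.card_univ,
    Fintype.card_fin]
  simp only [nsmul_eq_mul]

private lemma sauer_bound {n d : ℕ} (F : Finset (Finset (Fin n)))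
    (hVC : ∀ R : Finset (Fin n), F.Shatters R → R.card < d) :
    F.card ≤ ∑ k ∈ Finset.range d, n.choose k := by
  refine (Finset.card_le_card_shatterer F).trans ?_
  have hsub : F.shatterer ⊆ (Finset.range d).biUnion
      (fun k => Finset.powersetCard k (Finset.univ : Finset (Fin n))) := by
    intro s hs
    rw [Finset.mem_shatterer] at hs
    exact Finset.mem_biUnion.2 ⟨s.card, Finset.mem_range.2 (hVC s hs),
      Finset.mem_powersetCard_univ.2 rfl⟩
  refine (Finset.card_le_card hsub).trans ?_
  refine Finset.card_biUnion_le.trans (le_of_eq ?_)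
  exact Finset.sum_congr rfl fun k _ => by
    rw [Finset.card_powersetCard, Finset.card_univ, Fintype.card_fin]

/-- If every set shattered by `F ⊆ 2^[n]` has fewer than `d` elements
(i.e. the VC-dimension of `F` is less than `d`), then `ℓ(F) < 2d`. -/
theorem lubell_lt_of_vc_lt (n d : ℕ) (hd : 0 < d) (F : Finset (Finset (Fin n)))
    (hVC : ∀ R : Finset (Fin n), F.Shatters R → R.card < d) :
    (∑ A ∈ F, (1 : ℝ) / (n.choose A.card)) < 2 * d := by
  obtain ⟨e, rfl⟩ : ∃ e, d = e + 1 := ⟨d - 1, by omega⟩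
  have hpos : ∀ j : ℕ, j ≤ n → (0 : ℝ) < (n.choose j : ℝ) := fun j hj => by
    exact_mod_cast Nat.choose_pos hj
  rcases le_or_gt (n + 2) (2 * (e + 1)) with hn | hn
  · -- small case : ℓ ≤ n + 1 < 2d
    have h1 : (∑ A ∈ F, (1 : ℝ) / (n.choose A.card)) ≤
        ∑ A : Finset (Fin n), (1 : ℝ) / (n.choose A.card) :=
      Finset.sum_le_sum_of_subset_of_nonneg (Finset.subset_univ F)
        (fun A _ _ => by positivity)
    have h2 : (∑ A : Finset (Fin n), (1 : ℝ) / (n.choose A.card)) = ((n : ℝ) + 1) := by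
      rw [sum_card_grouped n (fun j => (1 : ℝ) / (n.choose j))]
      have key : ∀ j ∈ Finset.range (n + 1),
          (n.choose j : ℝ) * ((1 : ℝ) / (n.choose j)) = 1 := by
        intro j hj
        have hj' : (0 : ℝ) < (n.choose j : ℝ) :=
          hpos j (Nat.lt_succ_iff.mp (Finset.mem_range.mp hj))
        rw [mul_one_div, div_self hj'.ne']
      rw [Finset.sum_congr rfl key, Finset.sum_const, Finset.card_range, nsmul_eq_mul,
        mul_one]
      push_cast
      ring
    have h3 : ((n : ℝ) + 1) < 2 * ((e : ℝ) + 1) := by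
      have : (n + 1 : ℕ) < 2 * (e + 1) := by omega
      exact_mod_cast this
    push_cast
    linarith
  · -- big case : n ≥ 2e + 1
    have hen : 2 * e + 1 ≤ n := by omega
    set C : ℝ := (n.choose e : ℝ) with hCdef
    have hCpos : 0 < C := hpos e (by omega)
    set t : ℕ → ℝ := fun j => max (1 - (n.choose j : ℝ) / C) 0 with ht
    have h1 : (∑ A ∈ F, (1 : ℝ) / (n.choose A.card)) ≤
        ∑ A ∈ F, (max ((1 : ℝ) / (n.choose A.card) - 1 / C) 0 + 1 / C) :=
      Finset.sum_le_sum fun A _ => by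
        have := le_max_left ((1 : ℝ) / (n.choose A.card) - 1 / C) 0
        linarith
    rw [Finset.sum_add_distrib, Finset.sum_const, nsmul_eq_mul] at h1
    have h2 : (∑ A ∈ F, max ((1 : ℝ) / (n.choose A.card) - 1 / C) 0) ≤
        ∑ A : Finset (Fin n), max ((1 : ℝ) / (n.choose A.card) - 1 / C) 0 :=
      Finset.sum_le_sum_of_subset_of_nonneg (Finset.subset_univ F)
        (fun A _ _ => le_max_right _ 0)
    have h3 : (∑ A : Finset (Fin n), max ((1 : ℝ) / (n.choose A.card) - 1 / C) 0) =
        ∑ j ∈ Finset.range (n + 1), t j := by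
      rw [sum_card_grouped n (fun j => max ((1 : ℝ) / (n.choose j) - 1 / C) 0)]
      refine Finset.sum_congr rfl fun j hj => ?_
      have hj' : (0 : ℝ) < (n.choose j : ℝ) :=
        hpos j (Nat.lt_succ_iff.mp (Finset.mem_range.mp hj))
      simp only [ht]
      rw [mul_max_of_nonneg _ _ hj'.le, mul_zero, mul_sub, mul_one_div, mul_one_div,
        div_self hj'.ne']
    have h4 : ∑ j ∈ Finset.range (n + 1), t j
        = (∑ j ∈ Finset.range e, t j) + ∑ j ∈ Finset.Ico e (n + 1), t j := by
      rw [Finset.range_eq_Ico, ← Finset.sum_Ico_consecutive t (Nat.zero_le e)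
        (by omega : e ≤ n + 1), ← Finset.range_eq_Ico]
    have htail : ∑ j ∈ Finset.Ico e (n + 1), t j
        = ∑ j ∈ Finset.Ico (n + 1 - e) (n + 1), t j := by
      refine (Finset.sum_subset (fun j hj => ?_) (fun j hj hj2 => ?_)).symm
      · rw [Finset.mem_Ico] at hj ⊢
        omega
      · rw [Finset.mem_Ico] at hj hj2
        push_neg at hj2
        have hle : C ≤ (n.choose j : ℝ) := by
          rw [hCdef]
          exact_mod_cast choose_mid_le hj.1 (by omega : j ≤ n - e)
        have h1le : (1 : ℝ) ≤ (n.choose j : ℝ) / C := (one_le_div hCpos).2 hle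
        simp only [ht]
        exact max_eq_right (by linarith)
    have hrefl : ∑ j ∈ Finset.Ico (n + 1 - e) (n + 1), t j
        = ∑ k ∈ Finset.range e, t (n - k) := by
      have h := Finset.sum_Ico_reflect t 0 (by omega : e ≤ n + 1)
      rw [Nat.sub_zero] at h
      rw [← h, Finset.range_eq_Ico]
    have hsymm : (∑ k ∈ Finset.range e, t (n - k)) = ∑ k ∈ Finset.range e, t k := by
      refine Finset.sum_congr rfl fun k hk => ?_
      have hk' : k ≤ n := by
        have := Finset.mem_range.mp hk; omega
      simp only [ht]
      rw [Nat.choose_symm hk']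
    have h6 : (∑ k ∈ Finset.range e, t k)
        = (e : ℝ) - ∑ k ∈ Finset.range e, (n.choose k : ℝ) / C := by
      have key : ∀ k ∈ Finset.range e, t k = 1 - (n.choose k : ℝ) / C := by
        intro k hk
        have hk' : k ≤ e := by have := Finset.mem_range.mp hk; omega
        have hle : (n.choose k : ℝ) ≤ C := by
          rw [hCdef]
          exact_mod_cast choose_mono_half hk' (by omega : 2 * e ≤ n)
        have hdiv : (n.choose k : ℝ) / C ≤ 1 := (div_le_one hCpos).2 hle
        simp only [ht]
        exact max_eq_left (by linarith)
      rw [Finset.sum_congr rfl key, Finset.sum_sub_distrib, Finset.sum_const,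
        Finset.card_range, nsmul_eq_mul, mul_one]
    have hS : (F.card : ℝ) ≤ ∑ k ∈ Finset.range (e + 1), (n.choose k : ℝ) := by
      exact_mod_cast sauer_bound F hVC
    have hXnn : (0 : ℝ) ≤ ∑ k ∈ Finset.range e, (n.choose k : ℝ) / C :=
      Finset.sum_nonneg fun k _ => by positivity
    have h7 : (F.card : ℝ) * (1 / C) ≤
        (∑ k ∈ Finset.range e, (n.choose k : ℝ) / C) + 1 := by
      have hmul := mul_le_mul_of_nonneg_right hS (le_of_lt (one_div_pos.2 hCpos))
      have heq : (∑ k ∈ Finset.range (e + 1), (n.choose k : ℝ)) * (1 / C)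
          = (∑ k ∈ Finset.range e, (n.choose k : ℝ) / C) + 1 := by
        rw [Finset.sum_range_succ, add_mul, mul_one_div, mul_one_div,
          Finset.sum_div, ← hCdef, div_self hCpos.ne']
      linarith
    push_cast
    linarith
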